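/- Let Z = (Z₁, Z₂) have density f(z) = 2 φ₂(z; Ω) G(w₂(z₁, z₂)) where Ω = [[1,ρ],[ρ,1]], |ρ| < 1, w₂(z₂, z₁) = -w₂(z₁, z₂), and G is a CDF with G(-x) = 1 - G(x). Then Z^T Ω⁻¹ Z has a chi-squared distribution with 2 degrees of freedom. -/

import Mathlib

open MeasureTheory Set Real
open scoped ENNReal

theorem lintegral_comp_polarCoord_symm' (g : ℝ × ℝ → ℝ≥0∞) :
    (∫⁻ p in polarCoord.target, ENNReal.ofReal p.1 * g (polarCoord.symm p)) = ∫⁻ p, g p := by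
  set B : ℝ × ℝ → ℝ × ℝ →L[ℝ] ℝ × ℝ := fun p =>
    LinearMap.toContinuousLinearMap (Matrix.toLin (Module.Basis.finTwoProd ℝ) (Module.Basis.finTwoProd ℝ)
      !![cos p.2, -p.1 * sin p.2; sin p.2, p.1 * cos p.2])
  have A : ∀ p ∈ polarCoord.target, HasFDerivWithinAt polarCoord.symm (B p) polarCoord.target p :=
    fun p _ => (hasFDerivAt_polarCoord_symm p).hasFDerivWithinAt
  have B_det : ∀ p, (B p).det = p.1 := by
    intro p
    conv_rhs => rw [← one_mul p.1, ← cos_sq_add_sin_sq p.2]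
    simp only [B, neg_mul, LinearMap.det_toContinuousLinearMap, LinearMap.det_toLin,
      Matrix.det_fin_two_of, sub_neg_eq_add]
    ring
  symm
  calc
    ∫⁻ p, g p = ∫⁻ p in polarCoord.source, g p := by
      rw [← setLIntegral_univ]
      exact setLIntegral_congr polarCoord_source_ae_eq_univ.symm
    _ = ∫⁻ p in polarCoord.symm '' polarCoord.target, g p := by
      rw [polarCoord.symm_image_target_eq_source]
    _ = ∫⁻ p in polarCoord.target, ENNReal.ofReal |(B p).det| * g (polarCoord.symm p) :=
      lintegral_image_eq_lintegral_abs_det_fderiv_mul volume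
        polarCoord.open_target.measurableSet A polarCoord.symm.injOn g
    _ = ∫⁻ p in polarCoord.target, ENNReal.ofReal p.1 * g (polarCoord.symm p) := by
      apply setLIntegral_congr_fun_ae polarCoord.open_target.measurableSet
      filter_upwards with p hp
      rw [B_det, abs_of_pos hp.1]

theorem mahalanobis_chi_squared
    {Ω : Type*} [MeasurableSpace Ω] (P : Measure Ω) [IsProbabilityMeasure P]
    (ρ : ℝ) (hρ : |ρ| < 1)
    (φ₂ : ℝ × ℝ → ℝ)
    (hφ₂ : ∀ z : ℝ × ℝ, φ₂ z =
      (2 * π * Real.sqrt (1 - ρ ^ 2))⁻¹ *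
        Real.exp (-(z.1 ^ 2 - 2 * ρ * z.1 * z.2 + z.2 ^ 2) / (2 * (1 - ρ ^ 2))))
    (w₂ : ℝ → ℝ → ℝ) (G : ℝ → ℝ)
    (hw₂_meas : Measurable (fun p : ℝ × ℝ => w₂ p.1 p.2))
    (hw₂_anti : ∀ z₁ z₂, w₂ z₂ z₁ = -w₂ z₁ z₂)
    (hG_mono : Monotone G) (hG_range : ∀ x, G x ∈ Icc (0:ℝ) 1)
    (hG_symm : ∀ x, G (-x) = 1 - G x)
    (Z : Ω → ℝ × ℝ) (hZ : Measurable Z)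
    (hZlaw : Measure.map Z P = volume.withDensity
      (fun z : ℝ × ℝ => ENNReal.ofReal (2 * φ₂ z * G (w₂ z.1 z.2)))) :
    Measure.map (fun ω =>
        ((Z ω).1 ^ 2 - 2 * ρ * (Z ω).1 * (Z ω).2 + (Z ω).2 ^ 2) / (1 - ρ ^ 2)) P =
      volume.withDensity (fun x : ℝ =>
        ENNReal.ofReal (if 0 < x then (1 / 2) * Real.exp (-x / 2) else 0)) := by
  have hρ2 : (0:ℝ) < 1 - ρ ^ 2 := by
    have h := abs_lt.mp hρ
    nlinarith [h.1, h.2]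
  set c := Real.sqrt (1 - ρ ^ 2) with hc
  have hc0 : 0 < c := Real.sqrt_pos.mpr hρ2
  have hc2 : c ^ 2 = 1 - ρ ^ 2 := Real.sq_sqrt hρ2.le
  set t : ℝ × ℝ → ℝ := fun z => (z.1 ^ 2 - 2 * ρ * z.1 * z.2 + z.2 ^ 2) / (1 - ρ ^ 2) with ht
  have htm : Measurable t := by
    apply Measurable.div _ measurable_const
    fun_prop
  -- basic facts about φ₂
  have hφ₂m : Measurable φ₂ := by
    rw [show φ₂ = fun z : ℝ × ℝ => (2 * π * Real.sqrt (1 - ρ ^ 2))⁻¹ *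
        Real.exp (-(z.1 ^ 2 - 2 * ρ * z.1 * z.2 + z.2 ^ 2) / (2 * (1 - ρ ^ 2)))
      from funext hφ₂]
    fun_prop
  have hφ₂0 : ∀ z, 0 ≤ φ₂ z := by
    intro z
    rw [hφ₂]
    have : (0:ℝ) < 2 * π * Real.sqrt (1 - ρ ^ 2) := by positivity
    positivity
  have hφ₂swap : ∀ z : ℝ × ℝ, φ₂ (z.2, z.1) = φ₂ z := by
    intro z
    rw [hφ₂, hφ₂]
    ring_nf
  set f : ℝ × ℝ → ℝ := fun z => 2 * φ₂ z * G (w₂ z.1 z.2) with hf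
  have hGw_m : Measurable fun z : ℝ × ℝ => G (w₂ z.1 z.2) :=
    hG_mono.measurable.comp hw₂_meas
  have hfm : Measurable f := by
    apply Measurable.mul _ hGw_m
    exact (measurable_const.mul hφ₂m)
  have hf0 : ∀ z, 0 ≤ f z := by
    intro z
    have := (hG_range (w₂ z.1 z.2)).1
    have := hφ₂0 z
    positivity
  have hkey : ∀ z : ℝ × ℝ, f z + f (z.2, z.1) = 2 * φ₂ z := by
    intro z
    simp only [hf]
    rw [hφ₂swap z, hw₂_anti, hG_symm]
    ring
  -- step 1 : rewrite the pushforward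
  have h0 : (fun ω => ((Z ω).1 ^ 2 - 2 * ρ * (Z ω).1 * (Z ω).2 + (Z ω).2 ^ 2) / (1 - ρ ^ 2))
      = t ∘ Z := rfl
  rw [h0, ← Measure.map_map htm hZ, hZlaw]
  -- now prove equality of measures on ℝ
  ext A hA
  rw [Measure.map_apply htm hA, withDensity_apply _ (htm hA), withDensity_apply _ hA]
  -- symmetrization
  have hswapset : ∀ z : ℝ × ℝ, (z.2, z.1) ∈ t ⁻¹' A ↔ z ∈ t ⁻¹' A := by
    intro z
    simp only [mem_preimage, ht]
    constructor <;> intro h <;> [skip; skip] <;>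
      · convert h using 2
        ring
  have mp : MeasurePreserving (Prod.swap : ℝ × ℝ → ℝ × ℝ) volume volume := by
    rw [Measure.volume_eq_prod]
    exact Measure.measurePreserving_swap
  have hpre : (Prod.swap : ℝ × ℝ → ℝ × ℝ) ⁻¹' (t ⁻¹' A) = t ⁻¹' A := by
    ext z
    exact hswapset z
  have hswap : (∫⁻ z in t ⁻¹' A, ENNReal.ofReal (f (z.2, z.1))) =
      ∫⁻ z in t ⁻¹' A, ENNReal.ofReal (f z) := by
    have h := mp.setLIntegral_comp_preimage (htm hA) (f := fun z => ENNReal.ofReal (f z))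
      hfm.ennreal_ofReal
    rw [hpre] at h
    exact h
  have htwo : (2 : ℝ≥0∞) * (∫⁻ z in t ⁻¹' A, ENNReal.ofReal (f z)) =
      2 * ∫⁻ z in t ⁻¹' A, ENNReal.ofReal (φ₂ z) := by
    rw [two_mul]
    nth_rewrite 1 [← hswap]
    rw [← lintegral_add_left (by fun_prop : Measurable fun z : ℝ × ℝ => ENNReal.ofReal (f (z.2, z.1)))]
    rw [← lintegral_const_mul 2 hφ₂m.ennreal_ofReal]
    apply lintegral_congr
    intro z
    rw [← ENNReal.ofReal_add (hf0 _) (hf0 _)]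
    have h2 : f (z.2, z.1) + f z = 2 * φ₂ z := by
      have := hkey z
      linarith
    rw [h2, ENNReal.ofReal_mul (by norm_num : (0:ℝ) ≤ 2), ENNReal.ofReal_ofNat]
  have hI : (∫⁻ z in t ⁻¹' A, ENNReal.ofReal (f z)) =
      ∫⁻ z in t ⁻¹' A, ENNReal.ofReal (φ₂ z) :=
    (ENNReal.mul_right_inj two_ne_zero ENNReal.ofNat_ne_top).mp htwo
  rw [hI]
  -- linear change of variables u ↦ (c u₁ + ρ u₂, u₂)
  set S : Set (ℝ × ℝ) := (fun u : ℝ × ℝ => u.1 ^ 2 + u.2 ^ 2) ⁻¹' A with hS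
  have hSm : MeasurableSet S :=
    (by fun_prop : Measurable fun u : ℝ × ℝ => u.1 ^ 2 + u.2 ^ 2) hA
  set L : ℝ × ℝ → ℝ × ℝ := fun u => (c * u.1 + ρ * u.2, u.2) with hL
  set Lc : ℝ × ℝ →L[ℝ] ℝ × ℝ := LinearMap.toContinuousLinearMap
    (Matrix.toLin (Module.Basis.finTwoProd ℝ) (Module.Basis.finTwoProd ℝ) !![c, ρ; 0, 1]) with hLcdef
  have hLcL : ⇑Lc = L := by
    funext u
    rw [hLcdef, Matrix.toLin_finTwoProd_toContinuousLinearMap]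
    simp [hL]
  have hLdet : Lc.det = c := by
    simp only [hLcdef, LinearMap.det_toContinuousLinearMap, LinearMap.det_toLin,
      Matrix.det_fin_two_of]
    ring
  have htL : ∀ u : ℝ × ℝ, t (L u) = u.1 ^ 2 + u.2 ^ 2 := by
    intro u
    simp only [ht, hL]
    rw [div_eq_iff hρ2.ne']
    linear_combination u.1 ^ 2 * hc2
  have himg : L '' S = t ⁻¹' A := by
    ext z
    simp only [mem_image, mem_preimage, hS]
    constructor
    · rintro ⟨u, hu, rfl⟩
      rw [htL]
      exact hu
    · intro hz
      refine ⟨((z.1 - ρ * z.2) / c, z.2), ?_, ?_⟩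
      · show ((z.1 - ρ * z.2) / c, z.2).1 ^ 2 + ((z.1 - ρ * z.2) / c, z.2).2 ^ 2 ∈ A
        rw [← htL ((z.1 - ρ * z.2) / c, z.2)]
        have : L ((z.1 - ρ * z.2) / c, z.2) = z := by
          simp only [hL]
          ext <;> simp <;> field_simp <;> ring
        rw [this]
        exact hz
      · simp only [hL]
        ext <;> simp <;> field_simp <;> ring
  have hInj : InjOn L S := by
    intro a _ b _ hab
    simp only [hL, Prod.mk.injEq] at hab
    obtain ⟨h1, h2⟩ := hab
    ext
    · rw [h2] at h1
      have := mul_left_cancel₀ hc0.ne' (by linarith : c * a.1 = c * b.1)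
      exact this
    · exact h2
  have hderiv : ∀ u ∈ S, HasFDerivWithinAt L Lc S u := by
    intro u _
    rw [← hLcL]
    exact Lc.hasFDerivAt.hasFDerivWithinAt
  have hφL : ∀ u : ℝ × ℝ, φ₂ (L u) = (2 * π * c)⁻¹ * Real.exp (-(u.1 ^ 2 + u.2 ^ 2) / 2) := by
    intro u
    rw [hφ₂]
    congr 1
    congr 1
    simp only [hL]
    rw [div_eq_div_iff (by positivity) (by norm_num)]
    linear_combination (-2 * u.1 ^ 2) * hc2
  have hcv : (∫⁻ z in t ⁻¹' A, ENNReal.ofReal (φ₂ z)) =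
      ∫⁻ u in S, ENNReal.ofReal ((2 * π)⁻¹ * Real.exp (-(u.1 ^ 2 + u.2 ^ 2) / 2)) := by
    rw [← himg, lintegral_image_eq_lintegral_abs_det_fderiv_mul volume hSm hderiv hInj]
    apply setLIntegral_congr_fun_ae hSm
    filter_upwards with u _
    rw [hLdet, abs_of_pos hc0, hφL, ← ENNReal.ofReal_mul hc0.le]
    congr 1
    field_simp
  rw [hcv]
  -- polar coordinates
  set h2 : ℝ × ℝ → ℝ≥0∞ :=
    fun u => ENNReal.ofReal ((2 * π)⁻¹ * Real.exp (-(u.1 ^ 2 + u.2 ^ 2) / 2)) with hh2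
  set F : ℝ → ℝ≥0∞ := fun r =>
    ((fun x : ℝ => x ^ 2) ⁻¹' A).indicator
      (fun r => ENNReal.ofReal (r * Real.exp (-r ^ 2 / 2) * (2 * π)⁻¹)) r with hF
  have hFm : Measurable F :=
    Measurable.indicator (by fun_prop) ((by fun_prop : Measurable fun x : ℝ => x ^ 2) hA)
  have hpolar : (∫⁻ u in S, h2 u) =
      ∫⁻ p in polarCoord.target, ENNReal.ofReal p.1 * (S.indicator h2) (polarCoord.symm p) := by
    rw [← lintegral_indicator hSm, ← lintegral_comp_polarCoord_symm']
  have hsq : ∀ p : ℝ × ℝ, (p.1 * cos p.2) ^ 2 + (p.1 * sin p.2) ^ 2 = p.1 ^ 2 := by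
    intro p
    linear_combination p.1 ^ 2 * (sin_sq_add_cos_sq p.2)
  have hstep : (∫⁻ p in polarCoord.target, ENNReal.ofReal p.1 *
      (S.indicator h2) (polarCoord.symm p)) = ∫⁻ p in polarCoord.target, F p.1 := by
    apply setLIntegral_congr_fun_ae polarCoord.open_target.measurableSet
    filter_upwards with p hp
    rw [polarCoord_target] at hp
    have hp1 : 0 < p.1 := hp.1
    have hmem : polarCoord.symm p ∈ S ↔ p.1 ^ 2 ∈ A := by
      simp only [hS, mem_preimage, polarCoord_symm_apply]
      rw [hsq p]
    by_cases hpA : p.1 ^ 2 ∈ A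
    · rw [Set.indicator_of_mem (hmem.mpr hpA), hF]
      dsimp only
      rw [Set.indicator_of_mem (by simpa using hpA)]
      simp only [hh2, polarCoord_symm_apply]
      rw [hsq p, ← ENNReal.ofReal_mul hp1.le]
      congr 1
      ring
    · rw [Set.indicator_of_notMem (fun h => hpA (hmem.mp h)), hF]
      dsimp only
      rw [Set.indicator_of_notMem (by simpa using hpA), mul_zero]
  have hfub : (∫⁻ p in polarCoord.target, F p.1) =
      ∫⁻ r in Ioi (0:ℝ), F r * ENNReal.ofReal (2 * π) := by
    rw [polarCoord_target, Measure.volume_eq_prod, ← Measure.prod_restrict,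
      lintegral_prod (fun p => F p.1) (hFm.comp measurable_fst).aemeasurable]
    apply lintegral_congr
    intro r
    dsimp only
    rw [lintegral_const]
    congr 1
    rw [Measure.restrict_apply MeasurableSet.univ, univ_inter, Real.volume_Ioo]
    congr 1
    ring
  have hsqimg : (fun r : ℝ => r ^ 2) '' Ioi 0 = Ioi 0 := by
    ext x
    simp only [mem_image, mem_Ioi]
    constructor
    · rintro ⟨r, hr, rfl⟩
      positivity
    · intro hx
      exact ⟨Real.sqrt x, Real.sqrt_pos.mpr hx, Real.sq_sqrt hx.le⟩
  have hsqinj : InjOn (fun r : ℝ => r ^ 2) (Ioi 0) := by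
    intro a ha b hb h
    simp only [mem_Ioi] at ha hb
    dsimp at h
    rw [← Real.sqrt_sq ha.le, ← Real.sqrt_sq hb.le, h]
  set g₀ : ℝ → ℝ≥0∞ :=
    fun x => A.indicator (fun x => ENNReal.ofReal ((1/2 : ℝ) * Real.exp (-x / 2))) x with hg₀
  have hsub : (∫⁻ x in Ioi (0:ℝ), g₀ x) =
      ∫⁻ r in Ioi (0:ℝ), ENNReal.ofReal |2 * r| * g₀ (r ^ 2) := by
    conv_lhs => rw [← hsqimg]
    have hder : ∀ r ∈ Ioi (0:ℝ), HasFDerivWithinAt (fun r : ℝ => r ^ 2)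
        (ContinuousLinearMap.smulRight (1 : ℝ →L[ℝ] ℝ) (2 * r)) (Ioi 0) r := by
      intro r _
      have h1 : HasDerivAt (fun x : ℝ => x ^ 2) (2 * r) r := by
        simpa using hasDerivAt_pow 2 r
      exact h1.hasDerivWithinAt.hasFDerivWithinAt
    have h := lintegral_image_eq_lintegral_abs_det_fderiv_mul volume measurableSet_Ioi
      hder hsqinj g₀
    simpa only [ContinuousLinearMap.smulRight_one_eq_toSpanSingleton,
      ContinuousLinearMap.det_toSpanSingleton] using h
  have hmatch : (∫⁻ r in Ioi (0:ℝ), F r * ENNReal.ofReal (2 * π)) =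
      ∫⁻ r in Ioi (0:ℝ), ENNReal.ofReal |2 * r| * g₀ (r ^ 2) := by
    apply setLIntegral_congr_fun_ae measurableSet_Ioi
    filter_upwards with r hr
    have hr0 : (0:ℝ) < r := hr
    by_cases hrA : r ^ 2 ∈ A
    · rw [hF, hg₀]
      dsimp only
      rw [Set.indicator_of_mem (by simpa using hrA), Set.indicator_of_mem hrA]
      rw [abs_of_pos (by positivity), ← ENNReal.ofReal_mul (by positivity),
        ← ENNReal.ofReal_mul (by positivity)]
      congr 1
      field_simp
    · rw [hF, hg₀]
      dsimp only
      rw [Set.indicator_of_notMem (by simpa using hrA),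
        Set.indicator_of_notMem hrA, zero_mul, mul_zero]
  have hfinal : (∫⁻ x in Ioi (0:ℝ), g₀ x) =
      ∫⁻ x in A, ENNReal.ofReal (if 0 < x then (1/2 : ℝ) * Real.exp (-x / 2) else 0) := by
    rw [← lintegral_indicator measurableSet_Ioi, ← lintegral_indicator hA]
    apply lintegral_congr
    intro x
    by_cases hx0 : 0 < x <;> by_cases hxA : x ∈ A <;>
      simp [hg₀, Set.indicator_apply, hx0, hxA]
  rw [hpolar, hstep, hfub, hmatch, ← hsub, hfinal]
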